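/- Identify ℂ[[z^{−1}]] with ℂ[[X]] via X = z^{−1} and let ∂φ := −X²·(dφ/dX). For every χ ∈ ℂ[[X]]: (a) the family (((−1)^k/k!)·∂^{k−1}(χ^k))_{k≥1} is formally summable (the X-adic order of ∂^{k−1}(χ^k) is at least k−1), so φ := Σ_{k≥1} ((−1)^k/k!)·∂^{k−1}(χ^k) is a well-defined element of ℂ[[X]]; (b) the family ((1/k!)·χ^k·∂^kφ)_{k≥0} is formally summable and χ + Σ_{k≥0} (1/k!)·χ^k·∂^kφ = 0. -/

import Mathlib

/-- The derivative `d/dX` of a formal power series. -/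
noncomputable def dX (φ : PowerSeries ℂ) : PowerSeries ℂ :=
  PowerSeries.mk fun n => ((n : ℂ) + 1) * PowerSeries.coeff (n + 1) φ

/-- The derivation `∂ = d/dz` on `ℂ[[z⁻¹]] ≅ ℂ[[X]]` (with `X = z⁻¹`): `∂φ = −X²·φ'`. -/
noncomputable def pd (φ : PowerSeries ℂ) : PowerSeries ℂ :=
  -(PowerSeries.X ^ 2 * dX φ)

open PowerSeries Finset

set_option synthInstance.maxHeartbeats 1000000 in
noncomputable def pdD : Derivation ℂ (PowerSeries ℂ) (PowerSeries ℂ) :=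
  (-(X ^ 2 : PowerSeries ℂ)) • PowerSeries.derivative ℂ

lemma pdD_apply (f : PowerSeries ℂ) : pdD f = pd f := by
  rw [pdD, Derivation.smul_apply, pd, smul_eq_mul, neg_mul]
  congr 2
  ext n
  simp [dX, PowerSeries.coeff_derivative, mul_comm]


lemma coeff_pd_zero (f : PowerSeries ℂ) : coeff 0 (pd f) = 0 := by
  simp [pd, coeff_mul, PowerSeries.coeff_X_pow]

lemma coeff_pd_one (f : PowerSeries ℂ) : coeff 1 (pd f) = 0 := by
  simp [pd, coeff_mul, Finset.Nat.antidiagonal_succ, PowerSeries.coeff_X_pow]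

lemma coeff_pd (m : ℕ) (f : PowerSeries ℂ) :
    coeff (m + 2) (pd f) = -((m : ℂ) + 1) * coeff (m + 1) f := by
  have h := PowerSeries.coeff_X_pow_mul (dX f) 2 m
  rw [pd, map_neg, h, dX, PowerSeries.coeff_mk]
  ring

lemma coeff_pd_succ (m : ℕ) (f : PowerSeries ℂ) :
    coeff (m + 1) (pd f) = -(m : ℂ) * coeff m f := by
  cases m with
  | zero => simp [coeff_pd_one]
  | succ j =>
    rw [coeff_pd j f]
    push_cast
    ring

lemma pd_iter_low : ∀ (k : ℕ) (f : PowerSeries ℂ) (m : ℕ), m < k →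
    coeff m (pd^[k] f) = 0 := by
  intro k
  induction k with
  | zero => intro f m hm; omega
  | succ j ih =>
    intro f m hm
    rw [Function.iterate_succ_apply']
    cases m with
    | zero => exact coeff_pd_zero _
    | succ i =>
      rw [coeff_pd_succ]
      rw [ih _ i (by omega)]
      ring

lemma low_mul_zero {m : ℕ} {a b : PowerSeries ℂ} (h : ∀ j ≤ m, coeff j b = 0) :
    coeff m (a * b) = 0 := by
  rw [coeff_mul]
  apply Finset.sum_eq_zero
  intro p hp
  rw [Finset.HasAntidiagonal.mem_antidiagonal] at hp
  rw [h p.2 (by omega), mul_zero]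

lemma coeff_pd_congr {m : ℕ} {f g : PowerSeries ℂ}
    (h : ∀ j ≤ m, coeff j f = coeff j g) (k : ℕ) :
    ∀ j ≤ m, coeff j (pd^[k] f) = coeff j (pd^[k] g) := by
  induction k with
  | zero => simpa using h
  | succ i ih =>
    intro j hj
    rw [Function.iterate_succ_apply', Function.iterate_succ_apply']
    cases j with
    | zero => rw [coeff_pd_zero, coeff_pd_zero]
    | succ l => rw [coeff_pd_succ, coeff_pd_succ, ih l (by omega)]

lemma coeff_mul_congr {m : ℕ} {a f g : PowerSeries ℂ}
    (h : ∀ j ≤ m, coeff j f = coeff j g) :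
    coeff m (a * f) = coeff m (a * g) := by
  rw [coeff_mul, coeff_mul]
  apply Finset.sum_congr rfl
  intro p hp
  rw [Finset.HasAntidiagonal.mem_antidiagonal] at hp
  rw [h p.2 (by omega)]

lemma pd_zero : pd (0 : PowerSeries ℂ) = 0 := by
  rw [← pdD_apply]; exact map_zero pdD

lemma pd_one : pd (1 : PowerSeries ℂ) = 0 := by
  rw [← pdD_apply]; exact pdD.map_one_eq_zero

lemma pd_smul (c : ℂ) (f : PowerSeries ℂ) : pd (c • f) = c • pd f := by
  rw [← pdD_apply, ← pdD_apply]; exact pdD.map_smul c f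

lemma pd_sum {ι : Type*} (s : Finset ι) (f : ι → PowerSeries ℂ) :
    pd (∑ i ∈ s, f i) = ∑ i ∈ s, pd (f i) := by
  simp only [← pdD_apply]
  exact map_sum pdD.toLinearMap f s

lemma pd_mul (a b : PowerSeries ℂ) : pd (a * b) = a * pd b + pd a * b := by
  rw [← pdD_apply, ← pdD_apply, ← pdD_apply, pdD.leibniz]
  rw [smul_eq_mul, smul_eq_mul]
  ring

lemma pd_pow (a : PowerSeries ℂ) (n : ℕ) :
    pd (a ^ n) = n • (a ^ (n - 1) * pd a) := by
  rw [← pdD_apply, ← pdD_apply, pdD.leibniz_pow]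
  rw [smul_eq_mul]

lemma pd_iter_one {n : ℕ} (hn : 1 ≤ n) : pd^[n] (1 : PowerSeries ℂ) = 0 := by
  obtain ⟨j, rfl⟩ := Nat.exists_eq_add_of_le hn
  rw [add_comm, Function.iterate_add_apply]
  simp only [Function.iterate_one, pd_one]
  exact Function.iterate_fixed pd_zero j

/-- The alternating sum `A n m = ∑_{q=0}^{n} (-1)^q C(n,q) χ^{n-q} ∂^m(χ^q)`. -/
noncomputable def Acal (χ : PowerSeries ℂ) (n m : ℕ) : PowerSeries ℂ :=
  ∑ q ∈ range (n + 1), ((-1 : ℂ) ^ q * (n.choose q : ℂ)) • (χ ^ (n - q) * pd^[m] (χ ^ q))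

lemma pd_Acal (χ : PowerSeries ℂ) (n m : ℕ) :
    pd (Acal χ (n + 1) m) =
      Acal χ (n + 1) (m + 1) + ((n : ℂ) + 1) • (pd χ * Acal χ n m) := by
  rw [Acal, pd_sum]
  have step : ∀ q ∈ range (n + 2),
      pd (((-1 : ℂ) ^ q * ((n + 1).choose q : ℂ)) • (χ ^ (n + 1 - q) * pd^[m] (χ ^ q)))
      = ((-1 : ℂ) ^ q * ((n + 1).choose q : ℂ)) • (χ ^ (n + 1 - q) * pd^[m + 1] (χ ^ q))
        + ((n : ℂ) + 1) •
            (((-1 : ℂ) ^ q * (n.choose q : ℂ)) • (χ ^ (n - q) * pd χ * pd^[m] (χ ^ q))) := by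
    intro q hq
    rw [mem_range] at hq
    rw [pd_smul, pd_mul, smul_add]
    congr 1
    · rw [Function.iterate_succ_apply']
    · rw [pd_pow]
      have hsub : n + 1 - q - 1 = n - q := by omega
      rw [hsub, smul_mul_assoc]
      rw [smul_comm ((-1 : ℂ) ^ q * ((n + 1).choose q : ℂ)) (n + 1 - q)]
      rw [← Nat.cast_smul_eq_nsmul ℂ (n + 1 - q)]
      rw [smul_smul, smul_smul]
      congr 1
      have key := congrArg (Nat.cast : ℕ → ℂ) (Nat.choose_mul_succ_eq n q)
      have hc : ((n + 1 - q : ℕ) : ℂ) = (n : ℂ) + 1 - (q : ℂ) := by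
        rw [Nat.cast_sub (Nat.le_of_lt_succ hq)]
        push_cast
        ring
      push_cast at key
      rw [hc] at key
      rw [hc]
      linear_combination (-(-1 : ℂ) ^ q) * key
  rw [Finset.sum_congr rfl step, Finset.sum_add_distrib]
  congr 1
  rw [← Finset.smul_sum]
  congr 1
  rw [Acal, Finset.mul_sum]
  rw [Finset.sum_range_succ]
  have hlast : ((-1 : ℂ) ^ (n + 1) * (n.choose (n + 1) : ℂ)) •
      (χ ^ (n - (n + 1)) * pd χ * pd^[m] (χ ^ (n + 1))) = 0 := by
    rw [Nat.choose_succ_self]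
    simp
  rw [hlast, add_zero]
  apply Finset.sum_congr rfl
  intro q hq
  rw [mul_smul_comm]
  ring_nf

lemma Acal_eq_zero (χ : PowerSeries ℂ) : ∀ m n : ℕ, m < n → Acal χ n m = 0 := by
  intro m
  induction m with
  | zero =>
    intro n hn
    rw [Acal]
    have step : ∀ q ∈ range (n + 1),
        ((-1 : ℂ) ^ q * (n.choose q : ℂ)) • (χ ^ (n - q) * pd^[0] (χ ^ q))
          = ((-1 : ℂ) ^ q * (n.choose q : ℂ)) • χ ^ n := by
      intro q hq
      rw [mem_range] at hq
      rw [Function.iterate_zero_apply, ← pow_add, Nat.sub_add_cancel (Nat.le_of_lt_succ hq)]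
    rw [Finset.sum_congr rfl step, ← Finset.sum_smul]
    have halt := Int.alternating_sum_range_choose (n := n)
    have : (∑ q ∈ range (n + 1), (-1 : ℂ) ^ q * (n.choose q : ℂ)) = 0 := by
      have := congrArg (Int.cast : ℤ → ℂ) halt
      push_cast at this
      rw [this, if_neg (by omega)]
    rw [this, zero_smul]
  | succ j ih =>
    intro n hn
    obtain ⟨n', rfl⟩ : ∃ n', n = n' + 1 := ⟨n - 1, by omega⟩
    have h := pd_Acal χ n' j
    rw [ih (n' + 1) (by omega), ih n' (by omega)] at h
    rw [pd_zero, mul_zero, smul_zero, add_zero] at h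
    exact h.symm

lemma acal_inner_sum (χ : PowerSeries ℂ) (n : ℕ) :
    ∑ q ∈ range (n + 1),
        ((-1 : ℂ) ^ (q + 1) * (((n + 1).choose (q + 1)) : ℂ)) •
          (χ ^ (n - q) * pd^[n] (χ ^ (q + 1)))
      = -(χ ^ (n + 1) * pd^[n] (1 : PowerSeries ℂ)) := by
  have h := Acal_eq_zero χ n (n + 1) (by omega)
  rw [Acal, Finset.sum_range_succ'] at h
  simp only [Nat.succ_sub_succ] at h
  simp only [pow_zero, one_mul, Nat.choose_zero_right, Nat.cast_one, Nat.sub_zero] at h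
  rw [one_smul] at h
  exact eq_neg_of_add_eq_zero_left h

lemma pd_iter_sum_smul {ι : Type*} (s : Finset ι) (c : ι → ℂ) (f : ι → PowerSeries ℂ) :
    ∀ k : ℕ, pd^[k] (∑ i ∈ s, c i • f i) = ∑ i ∈ s, c i • pd^[k] (f i) := by
  intro k
  induction k with
  | zero => simp
  | succ j ih =>
    rw [Function.iterate_succ_apply', ih, pd_sum]
    exact Finset.sum_congr rfl fun i _ => by
      rw [Function.iterate_succ_apply', pd_smul]

lemma scalar_eq (n q : ℕ) (hq : q ≤ n) :
    (1 / (((n - q).factorial : ℕ) : ℂ)) * ((-1 : ℂ) ^ (q + 1) / (((q + 1).factorial : ℕ) : ℂ))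
      = (1 / (((n + 1).factorial : ℕ) : ℂ)) *
          ((-1 : ℂ) ^ (q + 1) * (((n + 1).choose (q + 1)) : ℂ)) := by
  have key := Nat.choose_mul_factorial_mul_factorial (Nat.succ_le_succ hq)
  rw [Nat.succ_sub_succ] at key
  have keyC := congrArg (Nat.cast : ℕ → ℂ) key
  simp only [Nat.succ_eq_add_one] at keyC
  push_cast at keyC
  have h1 : (((n - q).factorial : ℕ) : ℂ) ≠ 0 := Nat.cast_ne_zero.mpr (Nat.factorial_ne_zero _)
  have h2 : ((((q + 1)).factorial : ℕ) : ℂ) ≠ 0 := Nat.cast_ne_zero.mpr (Nat.factorial_ne_zero _)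
  have h3 : ((((n + 1)).factorial : ℕ) : ℂ) ≠ 0 := Nat.cast_ne_zero.mpr (Nat.factorial_ne_zero _)
  field_simp
  linear_combination (-1 : ℂ) * keyC

/-- Lagrange reversion: (a) the family `(((−1)^k/k!)·∂^{k−1}(χ^k))_{k≥1}` (reindexed by
`k+1`) is formally summable — each `∂^k(χ^{k+1})` has `X`-adic order at least `k` — so it
has a coefficientwise sum `φ`; (b) the family `((1/k!)·χ^k·∂^kφ)_{k≥0}` is formally
summable and `χ + Σ_{k≥0} (1/k!)·χ^k·∂^kφ = 0`, i.e. `id+φ` is a left inverse of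
`id+χ` for composition. -/
theorem stmt_15 (χ : PowerSeries ℂ) :
    (∀ k m : ℕ, m < k → PowerSeries.coeff m (pd^[k] (χ ^ (k + 1))) = 0) ∧
      (∀ m : ℕ,
        {k : ℕ | PowerSeries.coeff m
            (((-1 : ℂ) ^ (k + 1) / (Nat.factorial (k + 1) : ℂ)) •
              pd^[k] (χ ^ (k + 1))) ≠ 0}.Finite) ∧
      ∀ φ : PowerSeries ℂ,
        (∀ m : ℕ, PowerSeries.coeff m φ =
          ∑' k : ℕ, PowerSeries.coeff m
            (((-1 : ℂ) ^ (k + 1) / (Nat.factorial (k + 1) : ℂ)) •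
              pd^[k] (χ ^ (k + 1)))) →
        (∀ m : ℕ,
          {k : ℕ | PowerSeries.coeff m
              ((1 / (Nat.factorial k : ℂ)) • (χ ^ k * pd^[k] φ)) ≠ 0}.Finite) ∧
        ∀ m : ℕ,
          PowerSeries.coeff m χ +
            ∑' k : ℕ, PowerSeries.coeff m
              ((1 / (Nat.factorial k : ℂ)) • (χ ^ k * pd^[k] φ)) = 0 := by
  refine ⟨fun k m hm => pd_iter_low k _ m hm, ?_, ?_⟩
  · intro m
    apply Set.Finite.subset (Set.finite_Iic m)
    intro k hk
    simp only [Set.mem_setOf_eq, map_smul, smul_eq_mul] at hk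
    simp only [Set.mem_Iic]
    by_contra hgt
    exact hk (by rw [pd_iter_low k _ m (by omega), mul_zero])
  intro φ hφ
  constructor
  · intro m
    apply Set.Finite.subset (Set.finite_Iic m)
    intro k hk
    simp only [Set.mem_setOf_eq, map_smul, smul_eq_mul] at hk
    simp only [Set.mem_Iic]
    by_contra hgt
    exact hk (by rw [low_mul_zero (fun j hj => pd_iter_low k φ j (by omega)), mul_zero])
  intro m
  -- the truncated φ
  set Φ : PowerSeries ℂ := ∑ q ∈ range (m + 1),
      ((-1 : ℂ) ^ (q + 1) / ((q + 1).factorial : ℂ)) • pd^[q] (χ ^ (q + 1)) with hΦ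
  have hφΦ : ∀ j ≤ m, coeff j φ = coeff j Φ := by
    intro j hj
    rw [hφ j, tsum_eq_sum (s := range (m + 1))
      (fun k hk => by
        rw [mem_range, not_lt] at hk
        rw [map_smul, smul_eq_mul, pd_iter_low k _ j (by omega), mul_zero]),
      hΦ, map_sum]
  have hts : (∑' k : ℕ, coeff m ((1 / (k.factorial : ℂ)) • (χ ^ k * pd^[k] φ)))
      = ∑ k ∈ range (m + 1), (1 / (k.factorial : ℂ)) * coeff m (χ ^ k * pd^[k] φ) := by
    rw [tsum_eq_sum (s := range (m + 1))
      (fun k hk => by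
        rw [mem_range, not_lt] at hk
        rw [map_smul, smul_eq_mul,
          low_mul_zero (fun j hj => pd_iter_low k φ j (by omega)), mul_zero])]
    exact Finset.sum_congr rfl fun k _ => by rw [map_smul, smul_eq_mul]
  rw [hts]
  have hrepl : ∀ k, k ≤ m → coeff m (χ ^ k * pd^[k] φ) = coeff m (χ ^ k * pd^[k] Φ) :=
    fun k _ => coeff_mul_congr (coeff_pd_congr hφΦ k)
  have hexp : ∀ k : ℕ, coeff m (χ ^ k * pd^[k] Φ)
      = ∑ q ∈ range (m + 1), ((-1 : ℂ) ^ (q + 1) / ((q + 1).factorial : ℂ)) *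
          coeff m (χ ^ k * pd^[k + q] (χ ^ (q + 1))) := by
    intro k
    rw [hΦ, pd_iter_sum_smul, Finset.mul_sum, map_sum]
    refine Finset.sum_congr rfl fun q _ => ?_
    rw [← Function.iterate_add_apply, mul_smul_comm, map_smul, smul_eq_mul]
  -- the grid function
  set F : ℕ → ℕ → ℂ := fun k q => (1 / (k.factorial : ℂ)) *
      (((-1 : ℂ) ^ (q + 1) / ((q + 1).factorial : ℂ)) *
        coeff m (χ ^ k * pd^[k + q] (χ ^ (q + 1)))) with hF
  have hvanish : ∀ k q : ℕ, m < k + q → F k q = 0 := by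
    intro k q h
    rw [hF]
    simp only
    rw [low_mul_zero (fun j hj => pd_iter_low (k + q) _ j (by omega)), mul_zero, mul_zero]
  have hmain : ∑ k ∈ range (m + 1), ∑ q ∈ range (m + 1), F k q
      = ∑ n ∈ range (m + 1), ∑ q ∈ range (n + 1), F (n - q) q := by
    rw [← Finset.sum_product', Finset.sum_sigma']
    rw [← Finset.sum_filter_of_ne
      (p := fun p : ℕ × ℕ => p.1 + p.2 ≤ m)
      (fun p _ hne => by by_contra hgt; exact hne (hvanish p.1 p.2 (by omega)))]
    refine Finset.sum_bij' (fun p _ => (⟨p.1 + p.2, p.2⟩ : Σ _ : ℕ, ℕ))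
      (fun p _ => ((p.1 - p.2, p.2) : ℕ × ℕ)) ?_ ?_ ?_ ?_ ?_
    · intro p hp
      simp only [Finset.mem_filter, Finset.mem_product, mem_range] at hp
      simp only [Finset.mem_sigma, mem_range]
      omega
    · intro p hp
      simp only [Finset.mem_sigma, mem_range] at hp
      simp only [Finset.mem_filter, Finset.mem_product, mem_range]
      omega
    · intro p hp
      simp only [Finset.mem_filter, Finset.mem_product, mem_range] at hp
      simp
    · intro p hp
      rcases p with ⟨a, b⟩
      simp only [Finset.mem_sigma, mem_range] at hp
      simp only [Sigma.mk.inj_iff, heq_eq_eq]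
      exact ⟨by omega, trivial⟩
    · intro p hp
      simp only [Finset.mem_filter, Finset.mem_product, mem_range] at hp
      simp
  have hinner : ∀ n ∈ range (m + 1), ∑ q ∈ range (n + 1), F (n - q) q
      = if n = 0 then -(coeff m χ) else 0 := by
    intro n _
    have hstep : ∀ q ∈ range (n + 1), F (n - q) q
        = (1 / (((n + 1).factorial : ℕ) : ℂ)) *
            coeff m (((-1 : ℂ) ^ (q + 1) * (((n + 1).choose (q + 1)) : ℂ)) •
              (χ ^ (n - q) * pd^[n] (χ ^ (q + 1)))) := by
      intro q hq
      rw [mem_range] at hq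
      have hnq : n - q + q = n := by omega
      rw [hF]
      simp only
      rw [hnq, map_smul, smul_eq_mul, ← mul_assoc, ← mul_assoc,
        scalar_eq n q (by omega)]
    rw [Finset.sum_congr rfl hstep, ← Finset.mul_sum, ← map_sum, acal_inner_sum]
    rcases Nat.eq_zero_or_pos n with hn | hn
    · subst hn
      simp [Nat.factorial]
    · rw [pd_iter_one hn, mul_zero, neg_zero, map_zero, mul_zero, if_neg (by omega)]
  have : ∑ k ∈ range (m + 1), (1 / (k.factorial : ℂ)) * coeff m (χ ^ k * pd^[k] φ)
      = -(coeff m χ) := by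
    have h1 : ∀ k ∈ range (m + 1),
        (1 / (k.factorial : ℂ)) * coeff m (χ ^ k * pd^[k] φ)
          = ∑ q ∈ range (m + 1), F k q := by
      intro k hk
      rw [mem_range] at hk
      rw [hrepl k (by omega), hexp k, Finset.mul_sum]
    rw [Finset.sum_congr rfl h1, hmain, Finset.sum_congr rfl hinner]
    rw [Finset.sum_ite_eq' (range (m + 1)) 0 (fun _ => -(coeff m χ))]
    simp
  rw [this]
  ring
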